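/- Every continuous piecewise linear function f : ℝ → ℝ is computed by a ReLU network with one hidden layer: there exist n ∈ ℕ and real numbers c, a_1, …, a_n, w_1, …, w_n, b_1, …, b_n such that f(x) = c + Σ_{i=1}^n a_i · ReLU(w_i · x + b_i) for all x ∈ ℝ. Consequently, for every ℓ ≥ 2 the class of functions ℝ → ℝ computed by layered ReLU networks with 1 input and depth ℓ equals PL(1). -/

import Mathlib

/-- A closed convex polyhedron in ℝ: a finite intersection of closed half-spaces. -/
def IsPolyhedron1 (P : Set ℝ) : Prop :=
  ∃ s : Finset (ℝ × ℝ), P = {x : ℝ | ∀ p ∈ s, 0 ≤ p.1 * x + p.2}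

/-- A continuous piecewise linear function ℝ → ℝ (the class PL(1)). -/
def IsPWL1 (f : ℝ → ℝ) : Prop :=
  Continuous f ∧
    ∃ Ps : Finset (Set ℝ),
      (∀ P ∈ Ps, IsPolyhedron1 P) ∧
      (⋃ P ∈ Ps, P) = Set.univ ∧
      ∀ P ∈ Ps, ∃ a b : ℝ, ∀ x ∈ P, f x = a * x + b

/-- `forward n T k x` is σ(T_k(σ(T_{k-1}(⋯σ(T_1 x)⋯)))): the result of applying the
first k affine layers, each followed by the componentwise ReLU. -/
def forward (n : ℕ → ℕ) (T : ∀ i : ℕ, (Fin (n i) → ℝ) →ᵃ[ℝ] (Fin (n (i+1)) → ℝ)) :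
    ∀ k : ℕ, (Fin (n 0) → ℝ) → Fin (n k) → ℝ
  | 0, x => x
  | k+1, x => fun j => max (T k (forward n T k x) j) 0

/-- Every continuous piecewise linear f : ℝ → ℝ is computed by a one-hidden-layer
ReLU network, and consequently, for every depth ℓ ≥ 2 (here ℓ = k + 2), the class of
functions ℝ → ℝ computed by layered ReLU networks with 1 input and depth ℓ is
exactly PL(1). -/
lemma isPolyhedron1_univ : IsPolyhedron1 (Set.univ) := ⟨∅, by simp⟩

lemma isPolyhedron1_halfspace (a b : ℝ) : IsPolyhedron1 {x : ℝ | 0 ≤ a * x + b} :=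
  ⟨{(a, b)}, by ext x; simp⟩

lemma IsPolyhedron1.inter {P Q : Set ℝ} (hP : IsPolyhedron1 P) (hQ : IsPolyhedron1 Q) :
    IsPolyhedron1 (P ∩ Q) := by
  obtain ⟨s, rfl⟩ := hP; obtain ⟨t, rfl⟩ := hQ
  refine ⟨s ∪ t, ?_⟩
  ext x
  simp only [Set.mem_inter_iff, Set.mem_setOf_eq, Finset.mem_union]
  constructor
  · rintro ⟨h1, h2⟩ p hp; rcases hp with hp | hp; exacts [h1 p hp, h2 p hp]
  · intro h; exact ⟨fun p hp => h p (Or.inl hp), fun p hp => h p (Or.inr hp)⟩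

lemma IsPWL1.congr {f g : ℝ → ℝ} (hf : IsPWL1 f) (h : ∀ x, f x = g x) : IsPWL1 g := by
  have : f = g := funext h
  rwa [← this]

lemma isPWL1_affine (a b : ℝ) : IsPWL1 (fun x => a * x + b) := by
  refine ⟨by continuity, {Set.univ}, ?_, by simp, ?_⟩
  · intro P hP; simp at hP; subst hP; exact isPolyhedron1_univ
  · intro P hP; exact ⟨a, b, fun x _ => rfl⟩

lemma isPWL1_const (c : ℝ) : IsPWL1 (fun _ => c) :=
  (isPWL1_affine 0 c).congr (by intro x; ring)

lemma IsPWL1.add {f g : ℝ → ℝ} (hf : IsPWL1 f) (hg : IsPWL1 g) :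
    IsPWL1 (fun x => f x + g x) := by
  classical
  obtain ⟨hfc, Pf, hPf, hcovf, haf⟩ := hf
  obtain ⟨hgc, Pg, hPg, hcovg, hag⟩ := hg
  refine ⟨hfc.add hgc, (Pf ×ˢ Pg).image (fun pq => pq.1 ∩ pq.2), ?_, ?_, ?_⟩
  · intro P hP
    simp only [Finset.mem_image, Finset.mem_product] at hP
    obtain ⟨⟨P1, P2⟩, ⟨h1, h2⟩, rfl⟩ := hP
    exact (hPf P1 h1).inter (hPg P2 h2)
  · apply Set.eq_univ_of_forall
    intro x
    have h1 : x ∈ ⋃ P ∈ Pf, P := hcovf ▸ Set.mem_univ x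
    have h2 : x ∈ ⋃ P ∈ Pg, P := hcovg ▸ Set.mem_univ x
    simp only [Set.mem_iUnion] at h1 h2 ⊢
    obtain ⟨P1, hP1, hx1⟩ := h1
    obtain ⟨P2, hP2, hx2⟩ := h2
    exact ⟨P1 ∩ P2, Finset.mem_image.2 ⟨(P1, P2), Finset.mem_product.2 ⟨hP1, hP2⟩, rfl⟩, hx1, hx2⟩
  · intro P hP
    simp only [Finset.mem_image, Finset.mem_product] at hP
    obtain ⟨⟨P1, P2⟩, ⟨h1, h2⟩, rfl⟩ := hP
    obtain ⟨a1, b1, hab1⟩ := haf P1 h1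
    obtain ⟨a2, b2, hab2⟩ := hag P2 h2
    exact ⟨a1 + a2, b1 + b2, fun x hx => by
      show f x + g x = _
      rw [hab1 x hx.1, hab2 x hx.2]; ring⟩

lemma IsPWL1.const_mul {f : ℝ → ℝ} (c : ℝ) (hf : IsPWL1 f) : IsPWL1 (fun x => c * f x) := by
  obtain ⟨hfc, Pf, hPf, hcovf, haf⟩ := hf
  refine ⟨continuous_const.mul hfc, Pf, hPf, hcovf, ?_⟩
  intro P hP
  obtain ⟨a, b, hab⟩ := haf P hP
  exact ⟨c * a, c * b, fun x hx => by show c * f x = _; rw [hab x hx]; ring⟩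

lemma IsPWL1.relu {f : ℝ → ℝ} (hf : IsPWL1 f) : IsPWL1 (fun x => max (f x) 0) := by
  classical
  obtain ⟨hc, Ps, hpoly, hcov, haff⟩ := hf
  choose A B hAB using haff
  refine ⟨hc.max continuous_const,
    Ps.attach.biUnion (fun P =>
      {P.1 ∩ {x | 0 ≤ A P.1 P.2 * x + B P.1 P.2},
       P.1 ∩ {x | 0 ≤ -(A P.1 P.2) * x + -(B P.1 P.2)}}), ?_, ?_, ?_⟩
  · intro Q hQ
    simp only [Finset.mem_biUnion, Finset.mem_attach, Finset.mem_insert, Finset.mem_singleton,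
      true_and] at hQ
    obtain ⟨P, hQ | hQ⟩ := hQ <;> subst hQ
    · exact (hpoly P.1 P.2).inter (isPolyhedron1_halfspace _ _)
    · exact (hpoly P.1 P.2).inter (isPolyhedron1_halfspace _ _)
  · apply Set.eq_univ_of_forall
    intro x
    have h1 : x ∈ ⋃ P ∈ Ps, P := hcov ▸ Set.mem_univ x
    simp only [Set.mem_iUnion] at h1
    obtain ⟨P, hP, hx⟩ := h1
    simp only [Set.mem_iUnion, Finset.mem_biUnion, Finset.mem_attach, Finset.mem_insert,
      Finset.mem_singleton, true_and]
    rcases le_total 0 (A P hP * x + B P hP) with h | h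
    · exact ⟨_, ⟨⟨P, hP⟩, Or.inl rfl⟩, hx, h⟩
    · exact ⟨_, ⟨⟨P, hP⟩, Or.inr rfl⟩, hx, by simpa using by linarith⟩
  · intro Q hQ
    simp only [Finset.mem_biUnion, Finset.mem_attach, Finset.mem_insert, Finset.mem_singleton,
      true_and] at hQ
    obtain ⟨P, hQ | hQ⟩ := hQ <;> subst hQ
    · refine ⟨A P.1 P.2, B P.1 P.2, fun x hx => ?_⟩
      have := hAB P.1 P.2 x hx.1
      have h2 : 0 ≤ A P.1 P.2 * x + B P.1 P.2 := hx.2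
      show max (f x) 0 = _
      rw [this]; exact max_eq_left h2
    · refine ⟨0, 0, fun x hx => ?_⟩
      have := hAB P.1 P.2 x hx.1
      have h2 : (0:ℝ) ≤ -(A P.1 P.2) * x + -(B P.1 P.2) := hx.2
      show max (f x) 0 = _
      rw [this]
      have : A P.1 P.2 * x + B P.1 P.2 ≤ 0 := by linarith
      rw [max_eq_right this]; ring

lemma isPWL1_sum {ι : Type*} (s : Finset ι) (F : ι → ℝ → ℝ)
    (h : ∀ i ∈ s, IsPWL1 (F i)) : IsPWL1 (fun x => ∑ i ∈ s, F i x) := by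
  classical
  induction s using Finset.induction_on with
  | empty => exact (isPWL1_const 0).congr (by simp)
  | insert i s hni ih =>
    have := ((h i (Finset.mem_insert_self i s)).add
      (ih (fun j hj => h j (Finset.mem_insert_of_mem hj))))
    exact this.congr (fun x => by rw [Finset.sum_insert hni])

lemma pwl_affine_apply {m l : ℕ} (T : (Fin m → ℝ) →ᵃ[ℝ] (Fin l → ℝ)) (v : ℝ → Fin m → ℝ)
    (hv : ∀ i, IsPWL1 (fun x => v x i)) (j : Fin l) : IsPWL1 (fun x => T (v x) j) := by
  classical
  have hdec : ∀ u : Fin m → ℝ,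
      T u j = (∑ i, u i * T.linear (fun j' => if i = j' then 1 else 0) j) + T 0 j := by
    intro u
    have h1 : T u = T.linear u + T 0 := congrFun (AffineMap.decomp T) u
    have h2 : T.linear u = ∑ i, u i • T.linear (fun j' => if i = j' then 1 else 0) := by
      conv_lhs => rw [pi_eq_sum_univ u]
      rw [map_sum]
      simp only [LinearMap.map_smul]
    rw [h1, h2]
    simp [Finset.sum_apply, smul_eq_mul]
  have : IsPWL1 (fun x =>
      (∑ i, v x i * T.linear (fun j' => if i = j' then 1 else 0) j) + T 0 j) := by
    refine (IsPWL1.add ?_ (isPWL1_const (T 0 j))).congr (fun x => rfl)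
    refine isPWL1_sum Finset.univ _ (fun i _ => ?_)
    exact ((hv i).const_mul (T.linear (fun j' => if i = j' then 1 else 0) j)).congr
      (fun x => mul_comm _ _)
  exact this.congr (fun x => (hdec (v x)).symm)

lemma forward_pwl (n : ℕ → ℕ) (T : ∀ i : ℕ, (Fin (n i) → ℝ) →ᵃ[ℝ] (Fin (n (i+1)) → ℝ)) :
    ∀ j : ℕ, ∀ i : Fin (n j), IsPWL1 (fun x => forward n T j (fun _ => x) i) := by
  intro j
  induction j with
  | zero => intro i; exact (isPWL1_affine 1 0).congr (fun x => by simp [forward])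
  | succ j ih =>
    intro i
    have := (pwl_affine_apply (T j) (fun x => forward n T j (fun _ => x)) ih i).relu
    exact this.congr (fun x => by simp [forward])

def PiecewiseOn (s : Finset ℝ) (f : ℝ → ℝ) : Prop :=
  (∃ a b : ℝ, ∀ x : ℝ, (∀ t ∈ s, t ≤ x) → f x = a * x + b) ∧
  ∀ u ∈ s, ∃ a b : ℝ, ∀ x : ℝ, x ≤ u → (∀ t ∈ s, t ≤ x ∨ u ≤ t) → f x = a * x + b

lemma piecewiseOn_rep : ∀ (m : ℕ) (s : Finset ℝ) (f : ℝ → ℝ), s.card = m → PiecewiseOn s f →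
    ∃ (n : ℕ) (c : ℝ) (a w b : Fin n → ℝ),
      ∀ x : ℝ, f x = c + ∑ i, a i * max (w i * x + b i) 0 := by
  intro m
  induction m with
  | zero =>
    intro s f hcard hpw
    rw [Finset.card_eq_zero] at hcard
    subst hcard
    obtain ⟨a, b, hab⟩ := hpw.1
    refine ⟨2, b, ![a, -a], ![1, -1], ![0, 0], fun x => ?_⟩
    rw [hab x (by simp)]
    simp [Fin.sum_univ_two]
    have h := max_zero_sub_max_neg_zero_eq_self x
    linear_combination (-a) * h
  | succ m ih =>
    intro s f hcard hpw
    have hne : s.Nonempty := Finset.card_pos.1 (by omega)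
    set M := s.max' hne with hM
    obtain ⟨α', β', htop⟩ := hpw.1
    obtain ⟨α, β, hMp⟩ := hpw.2 M (s.max'_mem hne)
    have hMval : α * M + β = α' * M + β' := by
      rw [← hMp M le_rfl (fun t ht => Or.inl (s.le_max' t ht)),
        ← htop M (fun t ht => s.le_max' t ht)]
    set g := fun x => f x - (α' - α) * max (x - M) 0 with hg
    have hgpw : PiecewiseOn (s.erase M) g := by
      constructor
      · refine ⟨α, β, fun x hx => ?_⟩
        rcases le_total x M with h | h
        · have hfx : f x = α * x + β := by
            refine hMp x h (fun t ht => ?_)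
            by_cases ht' : t = M
            · exact Or.inr (le_of_eq ht'.symm)
            · exact Or.inl (hx t (Finset.mem_erase.2 ⟨ht', ht⟩))
          simp only [hg, hfx, max_eq_right (sub_nonpos.2 h)]
          ring
        · have hfx : f x = α' * x + β' := htop x (fun t ht => le_trans (s.le_max' t ht) h)
          show f x - (α' - α) * max (x - M) 0 = α * x + β
          rw [hfx, max_eq_left (sub_nonneg.2 h)]
          linear_combination -hMval
      · intro u hu
        have hune : u ≠ M := (Finset.mem_erase.1 hu).1
        have hus : u ∈ s := (Finset.mem_erase.1 hu).2
        have hult : u < M := lt_of_le_of_ne (s.le_max' u hus) hune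
        obtain ⟨a, b, hab⟩ := hpw.2 u hus
        refine ⟨a, b, fun x hxu hcond => ?_⟩
        have hfx : f x = a * x + b := by
          refine hab x hxu (fun t ht => ?_)
          by_cases ht' : t = M
          · exact Or.inr (ht' ▸ hult.le)
          · exact hcond t (Finset.mem_erase.2 ⟨ht', ht⟩)
        simp only [hg, hfx, max_eq_right (sub_nonpos.2 (le_trans hxu hult.le))]
        ring
    obtain ⟨n, c, a, w, b, hrep⟩ := ih (s.erase M) g
      (by rw [Finset.card_erase_of_mem (s.max'_mem hne), hcard]; omega) hgpw
    refine ⟨n + 1, c, Fin.snoc a (α' - α), Fin.snoc w 1, Fin.snoc b (-M), fun x => ?_⟩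
    rw [Fin.sum_univ_castSucc]
    simp only [Fin.snoc_castSucc, Fin.snoc_last]
    have h1 : g x = c + ∑ i : Fin n, a i * max (w i * x + b i) 0 := hrep x
    have h2 : g x = f x - (α' - α) * max (x - M) 0 := rfl
    have h3 : (1:ℝ) * x + -M = x - M := by ring
    rw [h3]
    linarith [h1, h2]

lemma isPWL1_rep (f : ℝ → ℝ) (hf : IsPWL1 f) :
    ∃ (n : ℕ) (c : ℝ) (a w b : Fin n → ℝ),
      ∀ x : ℝ, f x = c + ∑ i, a i * max (w i * x + b i) 0 := by
  classical
  obtain ⟨hc, Ps, hpoly, hcov, haff⟩ := hf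
  choose sP hsP using hpoly
  set S : Finset ℝ :=
    Ps.attach.biUnion (fun P => (sP P.1 P.2).image (fun p => if p.1 = 0 then 0 else -p.2 / p.1))
    with hS
  have key : ∀ I : Set ℝ, I.Nonempty → I.OrdConnected → (∀ r ∈ S, r ∉ I) →
      ∃ a b : ℝ, ∀ x ∈ closure I, f x = a * x + b := by
    rintro I ⟨x0, hx0⟩ hIoc hroots
    have hx0u : x0 ∈ ⋃ P ∈ Ps, P := hcov ▸ Set.mem_univ x0
    simp only [Set.mem_iUnion] at hx0u
    obtain ⟨P, hP, hx0P⟩ := hx0u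
    have hPI : I ⊆ P := by
      intro y hy
      rw [hsP P hP]
      rw [hsP P hP] at hx0P
      intro p hp
      by_contra hneg
      push_neg at hneg
      have hx0p := hx0P p hp
      rcases eq_or_ne p.1 0 with h0 | h0
      · rw [h0] at hneg hx0p; simp at hneg hx0p; linarith
      · have hrS : (-p.2 / p.1) ∈ S := by
          rw [hS]
          refine Finset.mem_biUnion.2 ⟨⟨P, hP⟩, Finset.mem_attach _ _, ?_⟩
          exact Finset.mem_image.2 ⟨p, hp, by rw [if_neg h0]⟩
        refine hroots _ hrS ?_
        rcases h0.lt_or_gt with hn | hp1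
        · -- p.1 < 0 : x0 ≤ r < y
          have h1 : -p.2 / p.1 < y := by
            rw [div_lt_iff_of_neg hn]
            nlinarith
          have h2 : x0 ≤ -p.2 / p.1 := by
            rw [le_div_iff_of_neg hn]
            nlinarith
          exact hIoc.out hx0 hy ⟨h2, h1.le⟩
        · -- p.1 > 0 : y < r ≤ x0
          have h1 : y < -p.2 / p.1 := by
            rw [lt_div_iff₀ hp1]
            nlinarith
          have h2 : -p.2 / p.1 ≤ x0 := by
            rw [div_le_iff₀ hp1]
            nlinarith
          exact hIoc.out hy hx0 ⟨h1.le, h2⟩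
    obtain ⟨a, b, hab⟩ := haff P hP
    refine ⟨a, b, fun x hx => ?_⟩
    have hcl : closure I ⊆ {x | f x = a * x + b} :=
      closure_minimal (fun y hy => hab y (hPI hy)) (isClosed_eq hc ((continuous_const.mul continuous_id).add continuous_const))
    exact hcl hx
  have hpw : PiecewiseOn S f := by
    constructor
    · rcases S.eq_empty_or_nonempty with hSe | hSne
      · obtain ⟨a, b, h⟩ := key Set.univ ⟨0, trivial⟩ Set.ordConnected_univ
          (fun r hr => by rw [hSe] at hr; simp at hr)
        exact ⟨a, b, fun x _ => h x (by rw [closure_univ]; trivial)⟩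
      · set m := S.max' hSne
        obtain ⟨a, b, h⟩ := key (Set.Ioi m) ⟨m + 1, by simp⟩ Set.ordConnected_Ioi
          (fun r hr hrI => absurd (S.le_max' r hr) (not_le.2 hrI))
        refine ⟨a, b, fun x hx => h x ?_⟩
        rw [closure_Ioi]
        exact hx m (S.max'_mem hSne)
    · intro u hu
      set B := S.filter (fun t => t < u) with hB
      rcases B.eq_empty_or_nonempty with hBe | hBne
      · obtain ⟨a, b, h⟩ := key (Set.Iio u) ⟨u - 1, by simp⟩ Set.ordConnected_Iio
          (fun r hr hrI => by
            have : r ∈ B := Finset.mem_filter.2 ⟨hr, hrI⟩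
            rw [hBe] at this; simp at this)
        exact ⟨a, b, fun x hxu _ => h x (by rw [closure_Iio]; exact hxu)⟩
      · set m' := B.max' hBne with hm'
        have hm'B : m' ∈ B := B.max'_mem hBne
        have hm'S : m' ∈ S := (Finset.mem_filter.1 hm'B).1
        have hm'u : m' < u := (Finset.mem_filter.1 hm'B).2
        obtain ⟨a, b, h⟩ := key (Set.Ioo m' u) ⟨(m' + u) / 2, Set.mem_Ioo.2 ⟨by linarith, by linarith⟩⟩
          Set.ordConnected_Ioo
          (fun r hr hrI => by
            have : r ∈ B := Finset.mem_filter.2 ⟨hr, hrI.2⟩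
            have := B.le_max' r this
            have := hrI.1
            simp only [← hm'] at *
            linarith)
        refine ⟨a, b, fun x hxu hcond => h x ?_⟩
        rw [closure_Ioo hm'u.ne]
        refine ⟨?_, hxu⟩
        rcases hcond m' hm'S with h1 | h1
        · exact h1
        · linarith
  exact piecewiseOn_rep S.card S f rfl hpw

noncomputable def layer {p q : ℕ} (A : Fin q → Fin p → ℝ) (c : Fin q → ℝ) : (Fin p → ℝ) →ᵃ[ℝ] (Fin q → ℝ) :=
  (Matrix.mulVecLin (Matrix.of A)).toAffineMap + AffineMap.const ℝ _ c

lemma layer_apply {p q : ℕ} (A : Fin q → Fin p → ℝ) (c : Fin q → ℝ) (v : Fin p → ℝ)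
    (j : Fin q) : layer A c v j = (∑ l, A j l * v l) + c j := by
  simp [layer, Matrix.mulVecLin_apply, Matrix.mulVec, dotProduct]

def netN (k n : ℕ) : ℕ → ℕ := fun i => if i = 0 then 1 else if i ≤ k + 1 then n else 1

def netE (k : ℕ) (w a : ℕ → ℝ) : ℕ → ℕ → ℕ → ℝ := fun i j l =>
  if i = 0 then w j else if i ≤ k then (if j = l then 1 else 0)
  else if i = k + 1 then a l else 0

def netC (k : ℕ) (b : ℕ → ℝ) (c : ℝ) : ℕ → ℕ → ℝ := fun i j =>
  if i = 0 then b j else if i = k + 1 then c else 0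

noncomputable def netT (k n : ℕ) (w b a : ℕ → ℝ) (c : ℝ) :
    ∀ i : ℕ, (Fin (netN k n i) → ℝ) →ᵃ[ℝ] (Fin (netN k n (i + 1)) → ℝ) := fun i =>
  layer (fun j l => netE k w a i j.val l.val) (fun j => netC k b c i j.val)

lemma rep_network (k : ℕ) (f : ℝ → ℝ) (n : ℕ) (c : ℝ) (a w b : Fin n → ℝ)
    (hrep : ∀ x : ℝ, f x = c + ∑ i, a i * max (w i * x + b i) 0) :
    ∃ (N : ℕ → ℕ) (h0 : N 0 = 1) (hout : N (k + 2) = 1)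
      (T : ∀ i : ℕ, (Fin (N i) → ℝ) →ᵃ[ℝ] (Fin (N (i + 1)) → ℝ)),
      ∀ x : ℝ, f x = T (k + 1) (forward N T (k + 1) (fun _ => x)) (Fin.cast hout.symm 0) := by
  classical
  set a' : ℕ → ℝ := fun j => if h : j < n then a ⟨j, h⟩ else 0 with ha'
  set w' : ℕ → ℝ := fun j => if h : j < n then w ⟨j, h⟩ else 0 with hw'
  set b' : ℕ → ℝ := fun j => if h : j < n then b ⟨j, h⟩ else 0 with hb'
  set N := netN k n with hNdef
  set T := netT k n w' b' a' c with hTdef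
  have hN0 : N 0 = 1 := by simp [hNdef, netN]
  have hNmid : ∀ i, 1 ≤ i → i ≤ k + 1 → N i = n := by
    intro i h1 h2
    show (if i = 0 then 1 else if i ≤ k + 1 then n else 1) = n
    rw [if_neg (by omega), if_pos h2]
  have hNout : N (k + 2) = 1 := by
    show (if k + 2 = 0 then 1 else if k + 2 ≤ k + 1 then n else 1) = 1
    rw [if_neg (by omega), if_neg (by omega)]
  have hT : ∀ (i : ℕ) (v : Fin (N i) → ℝ) (j : Fin (N (i + 1))),
      T i v j = (∑ l ∈ Finset.range (N i),
        netE k w' a' i j.val l * (if h : l < N i then v ⟨l, h⟩ else 0)) + netC k b' c i j.val := by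
    intro i v j
    rw [show T i v j = (∑ l : Fin (N i), netE k w' a' i j.val l.val * v l) + netC k b' c i j.val
      from layer_apply _ _ _ _]
    congr 1
    rw [← Fin.sum_univ_eq_sum_range
      (fun l => netE k w' a' i j.val l * (if h : l < N i then v ⟨l, h⟩ else 0)) (N i)]
    refine Finset.sum_congr rfl (fun l _ => ?_)
    rw [dif_pos l.isLt]
  have hfwd : ∀ j, 1 ≤ j → j ≤ k + 1 → ∀ (x : ℝ) (i : Fin (N j)),
      forward N T j (fun _ => x) i = max (w' i.val * x + b' i.val) 0 := by
    intro j
    induction j with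
    | zero => omega
    | succ j ih =>
      intro h1 h2 x i
      rcases Nat.eq_zero_or_pos j with hj0 | hj1
      · subst hj0
        show max (T 0 (forward N T 0 (fun _ => x)) i) 0 = _
        rw [show forward N T 0 (fun _ => x) = (fun _ => x) from rfl, hT 0 (fun _ => x) i]
        have hsum : ∑ l ∈ Finset.range (N 0),
            netE k w' a' 0 i.val l * (if h : l < N 0 then (fun _ => x) (⟨l, h⟩ : Fin (N 0)) else 0)
            = w' i.val * x := by
          rw [hN0, Finset.sum_range_one]
          rw [dif_pos (by omega : (0:ℕ) < 1)]
          show netE k w' a' 0 i.val 0 * x = _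
          rw [show netE k w' a' 0 i.val 0 = w' i.val from if_pos rfl]
        rw [hsum, show netC k b' c 0 i.val = b' i.val from if_pos rfl]
      · have hj2 : j ≤ k := by omega
        have hNj : N j = n := hNmid j hj1 (by omega)
        have hNj1 : N (j + 1) = n := hNmid (j + 1) (by omega) h2
        have hiv : i.val < N j := by have := i.isLt; omega
        show max (T j (forward N T j (fun _ => x)) i) 0 = _
        rw [hT j _ i]
        have hsum : ∑ l ∈ Finset.range (N j),
            netE k w' a' j i.val l * (if h : l < N j then forward N T j (fun _ => x) ⟨l, h⟩ else 0)
            = max (w' i.val * x + b' i.val) 0 := by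
          rw [Finset.sum_eq_single i.val]
          · rw [dif_pos hiv, ih hj1 (by omega) x ⟨i.val, hiv⟩]
            have hE : netE k w' a' j i.val i.val = 1 := by
              show (if j = 0 then _ else if j ≤ k then (if i.val = i.val then (1:ℝ) else 0)
                else if j = k + 1 then _ else 0) = 1
              rw [if_neg (by omega), if_pos hj2, if_pos rfl]
            rw [hE, one_mul]
          · intro l hl hne
            have hE0 : netE k w' a' j i.val l = 0 := by
              show (if j = 0 then _ else if j ≤ k then (if i.val = l then (1:ℝ) else 0)
                else if j = k + 1 then _ else 0) = 0
              rw [if_neg (by omega), if_pos hj2, if_neg (fun h => hne h.symm)]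
            rw [hE0, zero_mul]
          · intro hnot; exact absurd (Finset.mem_range.2 hiv) hnot
        rw [hsum]
        have hC : netC k b' c j i.val = 0 := by
          show (if j = 0 then _ else if j = k + 1 then _ else 0) = 0
          rw [if_neg (by omega), if_neg (by omega)]
        rw [hC, add_zero]
        exact max_eq_left (le_max_right _ _)
  refine ⟨N, hN0, hNout, T, fun x => ?_⟩
  rw [hT (k + 1) _ _]
  have hNk1 : N (k + 1) = n := hNmid (k + 1) (by omega) le_rfl
  have hsum : ∑ l ∈ Finset.range (N (k + 1)),
      netE k w' a' (k + 1) (Fin.cast hNout.symm 0).val l *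
        (if h : l < N (k + 1) then forward N T (k + 1) (fun _ => x) ⟨l, h⟩ else 0)
      = ∑ l ∈ Finset.range n, a' l * max (w' l * x + b' l) 0 := by
    refine Finset.sum_congr (by rw [hNk1]) (fun l hl => ?_)
    have hln : l < n := Finset.mem_range.1 hl
    have hlN : l < N (k + 1) := by omega
    rw [dif_pos hlN, hfwd (k + 1) (by omega) le_rfl x ⟨l, hlN⟩]
    congr 1
    show (if k + 1 = 0 then _ else if k + 1 ≤ k then _ else if k + 1 = k + 1 then a' l else 0) = a' l
    rw [if_neg (by omega), if_neg (by omega), if_pos rfl]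
  rw [hsum]
  have hCout : netC k b' c (k + 1) (Fin.cast hNout.symm 0).val = c := by
    show (if k + 1 = 0 then _ else if k + 1 = k + 1 then c else 0) = c
    rw [if_neg (by omega), if_pos rfl]
  rw [hCout, hrep x]
  have : ∑ i : Fin n, a i * max (w i * x + b i) 0
      = ∑ l ∈ Finset.range n, a' l * max (w' l * x + b' l) 0 := by
    rw [← Fin.sum_univ_eq_sum_range (fun l => a' l * max (w' l * x + b' l) 0) n]
    refine Finset.sum_congr rfl (fun i _ => ?_)
    rw [ha', hw', hb']
    simp only [dif_pos i.isLt, Fin.eta]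
  rw [this]
  ring

theorem pwl1_eq_relu_networks :
    (∀ f : ℝ → ℝ, IsPWL1 f → ∃ (n : ℕ) (c : ℝ) (a w b : Fin n → ℝ),
      ∀ x : ℝ, f x = c + ∑ i, a i * max (w i * x + b i) 0) ∧
    (∀ k : ℕ,
      {f : ℝ → ℝ | ∃ (n : ℕ → ℕ) (h0 : n 0 = 1) (hout : n (k+2) = 1)
          (T : ∀ i : ℕ, (Fin (n i) → ℝ) →ᵃ[ℝ] (Fin (n (i+1)) → ℝ)),
          ∀ x : ℝ, f x = T (k+1) (forward n T (k+1) (fun _ => x)) (Fin.cast hout.symm 0)}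
        = {f : ℝ → ℝ | IsPWL1 f}) := by
  constructor
  · exact isPWL1_rep
  · intro k
    ext f
    simp only [Set.mem_setOf_eq]
    constructor
    · rintro ⟨n, h0, hout, T, hfx⟩
      exact (pwl_affine_apply (T (k+1)) (fun x => forward n T (k+1) (fun _ => x))
        (forward_pwl n T (k+1)) (Fin.cast hout.symm 0)).congr (fun x => (hfx x).symm)
    · intro hf
      obtain ⟨n, c, a, w, b, hrep⟩ := isPWL1_rep f hf
      exact rep_network k f n c a w b hrep
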